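/- arXiv:1403.7420 — 2 statements merged into one kernel-verified Lean document; each statement's English description precedes it below -/
import Mathlib

section
/- Suppose α ≤ 0 ≤ γ with α ≠ γ (interpreting r^0/0 as log r). Then for every n ≥ 2, the infimum of E_n over configurations (x_1,…,x_n) ∈ (ℝ^d)^n with pairwise distinct points is attained. -/
open Finset

/-- `r^η/η` with the convention `r^0/0 = log r`. -/
noncomputable def pw (η r : ℝ) : ℝ := if η = 0 then Real.log r else r ^ η / η

noncomputable def En (d n : ℕ) (α γ : ℝ) (x : Fin n → EuclideanSpace ℝ (Fin d)) : ℝ :=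
  ∑ i, ∑ j, if i = j then 0 else pw γ ‖x i - x j‖ - pw α ‖x i - x j‖

open Filter Real Topology

lemma pw_log_le {β r : ℝ} (hβ : 0 < β) (hr : 0 < r) :
    Real.log r ≤ (r ^ β - 1) / β := by
  rw [le_div_iff₀ hβ]
  have h := Real.log_le_sub_one_of_pos (Real.rpow_pos_of_pos hr β)
  rwa [Real.log_rpow hr, mul_comm] at h

lemma pw_le_log {β r : ℝ} (hβ : β < 0) (hr : 0 < r) :
    (r ^ β - 1) / β ≤ Real.log r := by
  rw [div_le_iff_of_neg hβ]
  have h := Real.log_le_sub_one_of_pos (Real.rpow_pos_of_pos hr β)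
  rwa [Real.log_rpow hr, mul_comm] at h

lemma W_nonneg {α γ : ℝ} (hα : α ≤ 0) (hγ : 0 ≤ γ) (hne : α ≠ γ) {r : ℝ} (hr : 0 < r) :
    0 ≤ pw γ r - pw α r := by
  rcases hα.lt_or_eq with hαneg | rfl
  · rcases hγ.lt_or_eq with hγpos | rfl
    · have h1 : 0 ≤ r ^ γ / γ := div_nonneg (Real.rpow_nonneg hr.le γ) hγ
      have h2 : r ^ α / α ≤ 0 :=
        div_nonpos_of_nonneg_of_nonpos (Real.rpow_nonneg hr.le α) hα
      simp only [pw, hγpos.ne', hαneg.ne, if_false]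
      linarith
    · have h := pw_le_log hαneg hr
      have hs : (r ^ α - 1) / α = r ^ α / α - 1 / α := by ring
      have hneg : 1 / α < 0 := one_div_neg.2 hαneg
      simp only [pw, hαneg.ne, if_true, eq_self_iff_true, if_false]
      linarith
  · have hγpos : 0 < γ := lt_of_le_of_ne hγ hne
    have h := pw_log_le hγpos hr
    have hs : (r ^ γ - 1) / γ = r ^ γ / γ - 1 / γ := by ring
    have hpos : 0 < 1 / γ := one_div_pos.2 hγpos
    simp only [pw, hγpos.ne', if_true, eq_self_iff_true, if_false]
    linarith

lemma pw_contAt {η r : ℝ} (hr : 0 < r) : ContinuousAt (pw η) r := by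
  by_cases hη : η = 0
  · have h : pw η = Real.log := funext fun r => if_pos hη
    rw [h]
    exact Real.continuousAt_log hr.ne'
  · have h : pw η = fun r => r ^ η / η := funext fun r => if_neg hη
    rw [h]
    exact (Real.continuousAt_rpow_const r η (Or.inl hr.ne')).div_const η

lemma quad_tendsto {c : ℝ} (hc : 0 < c) :
    Tendsto (fun t : ℝ => (t ^ 2 - 2 * t + 2) / c) atTop atTop := by
  apply Tendsto.atTop_div_const hc
  apply tendsto_atTop_mono' atTop _ tendsto_id
  filter_upwards [eventually_ge_atTop (3 : ℝ)] with t ht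
  simp only [id_eq]
  nlinarith [sq_nonneg (t - 2)]

lemma rpow_tendsto_zero {β : ℝ} (hβ : β < 0) :
    Tendsto (fun r : ℝ => r ^ β) (𝓝[>] (0 : ℝ)) atTop := by
  have h : Tendsto (fun r : ℝ => (r⁻¹) ^ (-β)) (𝓝[>] (0 : ℝ)) atTop :=
    (tendsto_rpow_atTop (neg_pos.2 hβ)).comp tendsto_inv_nhdsGT_zero
  apply h.congr'
  filter_upwards [self_mem_nhdsWithin] with r hr
  have hr' : (0 : ℝ) < r := hr
  rw [Real.inv_rpow hr'.le, ← Real.rpow_neg hr'.le, neg_neg]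

lemma W_tendsto_atTop {α γ : ℝ} (hα : α ≤ 0) (hγ : 0 ≤ γ) (hne : α ≠ γ) :
    Tendsto (fun r => pw γ r - pw α r) atTop atTop := by
  rcases hγ.lt_or_eq.symm with rfl | hγpos
  · -- γ = 0, hence α < 0 : W = log r - r^α/α ≥ log r
    have hαneg : α < 0 := lt_of_le_of_ne hα hne
    apply tendsto_atTop_mono' atTop _ Real.tendsto_log_atTop
    filter_upwards [eventually_gt_atTop (0 : ℝ)] with r hr
    have h2 : r ^ α / α ≤ 0 :=
      div_nonpos_of_nonneg_of_nonpos (Real.rpow_nonneg hr.le α) hα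
    simp only [pw, hαneg.ne, if_true, eq_self_iff_true, if_false]
    linarith
  rcases hα.lt_or_eq with hαneg | rfl
  · -- α < 0 < γ : W ≥ r^γ/γ
    apply tendsto_atTop_mono' atTop _ ((tendsto_rpow_atTop hγpos).atTop_div_const hγpos)
    filter_upwards [eventually_gt_atTop (0 : ℝ)] with r hr
    have h2 : r ^ α / α ≤ 0 :=
      div_nonpos_of_nonneg_of_nonpos (Real.rpow_nonneg hr.le α) hα
    simp only [pw, hγpos.ne', hαneg.ne, if_false]
    linarith
  · -- α = 0 < γ : W = r^γ/γ - log r ≥ (t² - 2t + 2)/γ with t = r^(γ/2)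
    have key := (quad_tendsto hγpos).comp (tendsto_rpow_atTop (by linarith : (0 : ℝ) < γ / 2))
    apply tendsto_atTop_mono' atTop _ key
    filter_upwards [eventually_gt_atTop (0 : ℝ)] with r hr
    have hγ2 : (0 : ℝ) < γ / 2 := by linarith
    have hlog : Real.log r ≤ (r ^ (γ / 2) - 1) / (γ / 2) := pw_log_le hγ2 hr
    have hsq : (r ^ (γ / 2)) ^ 2 = r ^ γ := by
      rw [← Real.rpow_natCast (r ^ (γ / 2)) 2, ← Real.rpow_mul hr.le]
      norm_num
    simp only [Function.comp_apply, pw, hγpos.ne', if_false, if_true, eq_self_iff_true]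
    set t := r ^ (γ / 2) with ht
    have e2 : (t - 1) / (γ / 2) = (2 * t - 2) / γ := by
      rw [div_div_eq_mul_div]
      ring
    have hlog' : Real.log r ≤ (2 * t - 2) / γ := by rw [← e2]; exact hlog
    have e1 : (t ^ 2 - 2 * t + 2) / γ = t ^ 2 / γ - (2 * t - 2) / γ := by ring
    rw [← hsq]
    linarith

lemma W_tendsto_zero {α γ : ℝ} (hα : α ≤ 0) (hγ : 0 ≤ γ) (hne : α ≠ γ) :
    Tendsto (fun r => pw γ r - pw α r) (𝓝[>] (0 : ℝ)) atTop := by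
  rcases hα.lt_or_eq.symm with rfl | hαneg
  · -- α = 0, hence 0 < γ : W = r^γ/γ - log r ≥ - log r
    have hγpos : 0 < γ := lt_of_le_of_ne hγ hne
    have hneg : Tendsto (fun r : ℝ => -Real.log r) (𝓝[>] (0 : ℝ)) atTop :=
      tendsto_neg_atBot_atTop.comp Real.tendsto_log_nhdsGT_zero
    apply tendsto_atTop_mono' _ _ hneg
    filter_upwards [self_mem_nhdsWithin] with r hr
    have hr' : (0 : ℝ) < r := hr
    have h1 : 0 ≤ r ^ γ / γ := div_nonneg (Real.rpow_nonneg hr'.le γ) hγ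
    simp only [pw, hγpos.ne', if_true, eq_self_iff_true, if_false, Function.comp_apply]
    linarith
  rcases hγ.lt_or_eq with hγpos | rfl
  · -- α < 0 < γ : W ≥ r^α/(-α)
    have base : Tendsto (fun r : ℝ => r ^ α / (-α)) (𝓝[>] (0 : ℝ)) atTop :=
      (rpow_tendsto_zero hαneg).atTop_div_const (neg_pos.2 hαneg)
    apply tendsto_atTop_mono' _ _ base
    filter_upwards [self_mem_nhdsWithin] with r hr
    have hr' : (0 : ℝ) < r := hr
    have h1 : 0 ≤ r ^ γ / γ := div_nonneg (Real.rpow_nonneg hr'.le γ) hγ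
    have e : r ^ α / (-α) = -(r ^ α / α) := by rw [div_neg]
    simp only [pw, hγpos.ne', hαneg.ne, if_false]
    linarith
  · -- γ = 0, α < 0 : W = log r - r^α/α ≥ (t² - 2t + 2)/(-α) with t = r^(α/2)
    have key := (quad_tendsto (neg_pos.2 hαneg)).comp
      (rpow_tendsto_zero (by linarith : α / 2 < 0))
    apply tendsto_atTop_mono' _ _ key
    filter_upwards [self_mem_nhdsWithin] with r hr
    have hr' : (0 : ℝ) < r := hr
    have hα2 : α / 2 < 0 := by linarith
    have hlog : (r ^ (α / 2) - 1) / (α / 2) ≤ Real.log r := pw_le_log hα2 hr'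
    have hsq : (r ^ (α / 2)) ^ 2 = r ^ α := by
      rw [← Real.rpow_natCast (r ^ (α / 2)) 2, ← Real.rpow_mul hr'.le]
      norm_num
    simp only [Function.comp_apply, pw, hαneg.ne, if_false, if_true, eq_self_iff_true]
    set t := r ^ (α / 2) with ht
    have e2 : (t - 1) / (α / 2) = (2 * t - 2) / α := by
      rw [div_div_eq_mul_div]
      ring
    have hlog' : (2 * t - 2) / α ≤ Real.log r := by rw [← e2]; exact hlog
    have e1 : (t ^ 2 - 2 * t + 2) / α = t ^ 2 / α - (2 * t - 2) / α := by ring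
    have e0 : (t ^ 2 - 2 * t + 2) / (-α) = -((t ^ 2 - 2 * t + 2) / α) := by rw [div_neg]
    rw [← hsq]
    linarith

theorem stmt_5 (d n : ℕ) (hd : 1 ≤ d) (hn : 2 ≤ n) (α γ : ℝ)
    (hα : α ≤ 0) (hγ : 0 ≤ γ) (hne : α ≠ γ) :
    ∃ x : Fin n → EuclideanSpace ℝ (Fin d), Function.Injective x ∧
      ∀ y : Fin n → EuclideanSpace ℝ (Fin d), Function.Injective y →
        En d n α γ x ≤ En d n α γ y := by
  classical
  set E := EuclideanSpace ℝ (Fin d)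
  -- the reference configuration: points 0, v, 2v, ... on a line
  set v : E := EuclideanSpace.single (⟨0, hd⟩ : Fin d) (1 : ℝ) with hv
  have hvnorm : ‖v‖ = 1 := by
    rw [hv, EuclideanSpace.norm_single, norm_one]
  set x₀ : Fin n → E := fun i => ((i : ℕ) : ℝ) • v with hx₀
  have hdist : ∀ i j : Fin n, ‖x₀ i - x₀ j‖ = |((i : ℕ) : ℝ) - ((j : ℕ) : ℝ)| := by
    intro i j
    rw [hx₀]
    simp only
    rw [← sub_smul, norm_smul, hvnorm, mul_one, Real.norm_eq_abs]
  have hdist1 : ∀ i j : Fin n, i ≠ j → 1 ≤ ‖x₀ i - x₀ j‖ := by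
    intro i j hij
    rw [hdist i j]
    have hz : ((i : ℕ) : ℤ) ≠ ((j : ℕ) : ℤ) := by
      exact_mod_cast Fin.val_ne_of_ne hij
    have h1 : (1 : ℤ) ≤ |((i : ℕ) : ℤ) - ((j : ℕ) : ℤ)| := Int.one_le_abs (sub_ne_zero.2 hz)
    exact_mod_cast h1
  have hx₀inj : Function.Injective x₀ := by
    intro i j hij
    by_contra hne'
    have h := hdist1 i j hne'
    rw [hij, sub_self, norm_zero] at h
    linarith
  set E₀ := En d n α γ x₀ with hE₀
  -- thresholds
  have hz := (W_tendsto_zero hα hγ hne).eventually (eventually_gt_atTop E₀)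
  rw [eventually_nhdsWithin_iff, Metric.eventually_nhds_iff] at hz
  obtain ⟨ε, hεpos, hεW⟩ := hz
  obtain ⟨D, hDW⟩ := eventually_atTop.1
    ((W_tendsto_atTop hα hγ hne).eventually (eventually_gt_atTop E₀))
  set ε' := min ε 1 with hε'
  have hε'pos : 0 < ε' := lt_min hεpos one_pos
  have hε'le1 : ε' ≤ 1 := min_le_right _ _
  have hε'leε : ε' ≤ ε := min_le_left _ _
  set D' := max D (n : ℝ) with hD'
  have hD'n : (n : ℝ) ≤ D' := le_max_right _ _
  have hD'D : D ≤ D' := le_max_left _ _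
  have hD'pos : 0 < D' := lt_of_lt_of_le (by exact_mod_cast Nat.lt_of_lt_of_le two_pos hn) hD'n
  -- the compact set
  set K : Set (Fin n → E) :=
    (⋂ i, {x | ‖x i‖ ≤ D'}) ∩ ⋂ i, ⋂ j, {x | ε' ≤ ‖x i - x j‖ ∨ i = j} with hK
  have hx₀K : x₀ ∈ K := by
    constructor
    · refine Set.mem_iInter.2 fun i => ?_
      show ‖x₀ i‖ ≤ D'
      have : ‖x₀ i‖ = ((i : ℕ) : ℝ) := by
        rw [hx₀]
        simp only
        rw [norm_smul, hvnorm, mul_one, Real.norm_eq_abs, abs_of_nonneg (by positivity)]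
      rw [this]
      have : ((i : ℕ) : ℝ) ≤ (n : ℝ) := by exact_mod_cast (i.2.le)
      linarith
    · refine Set.mem_iInter.2 fun i => Set.mem_iInter.2 fun j => ?_
      by_cases hij : i = j
      · exact Or.inr hij
      · exact Or.inl (le_trans hε'le1 (hdist1 i j hij))
  have hKne : K.Nonempty := ⟨x₀, hx₀K⟩
  have hKclosed : IsClosed K := by
    apply IsClosed.inter
    · exact isClosed_iInter fun i =>
        isClosed_le ((continuous_apply i).norm) continuous_const
    · refine isClosed_iInter fun i => isClosed_iInter fun j => ?_
      by_cases hij : i = j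
      · simp [hij]
      · have : {x : Fin n → E | ε' ≤ ‖x i - x j‖ ∨ i = j}
            = {x : Fin n → E | ε' ≤ ‖x i - x j‖} := by
          ext x; simp [hij]
        rw [this]
        exact isClosed_le continuous_const
          (((continuous_apply i).sub (continuous_apply j)).norm)
  have hKbdd : Bornology.IsBounded K := by
    apply (Metric.isBounded_closedBall (x := (0 : Fin n → E)) (r := D')).subset
    intro x hx
    rw [Metric.mem_closedBall, dist_zero_right]
    rw [pi_norm_le_iff_of_nonneg hD'pos.le]
    exact fun i => Set.mem_iInter.1 hx.1 i
  have hKcomp : IsCompact K := Metric.isCompact_of_isClosed_isBounded hKclosed hKbdd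
  have hKsep : ∀ x ∈ K, ∀ i j : Fin n, i ≠ j → ε' ≤ ‖x i - x j‖ := by
    intro x hx i j hij
    have := Set.mem_iInter.1 (Set.mem_iInter.1 hx.2 i) j
    rcases this with h | h
    · exact h
    · exact absurd h hij
  -- continuity
  have hcont : ContinuousOn (En d n α γ) K := by
    unfold En
    apply continuousOn_finset_sum
    intro i _
    apply continuousOn_finset_sum
    intro j _
    by_cases hij : i = j
    · simp only [hij, if_true, eq_self_iff_true]
      exact continuousOn_const
    · intro x hx
      apply ContinuousAt.continuousWithinAt
      have hpos : 0 < ‖x i - x j‖ := lt_of_lt_of_le hε'pos (hKsep x hx i j hij)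
      have h1 : ContinuousAt (fun x : Fin n → E => ‖x i - x j‖) x :=
        (((continuous_apply i).sub (continuous_apply j)).norm).continuousAt
      have h2 : ContinuousAt (pw γ) ‖x i - x j‖ := pw_contAt hpos
      have h3 : ContinuousAt (pw α) ‖x i - x j‖ := pw_contAt hpos
      simp only [hij, if_false]
      exact ContinuousAt.sub
        (ContinuousAt.comp (g := pw γ) (f := fun x : Fin n → E => ‖x i - x j‖) h2 h1)
        (ContinuousAt.comp (g := pw α) (f := fun x : Fin n → E => ‖x i - x j‖) h3 h1)
  obtain ⟨z, hzK, hzmin⟩ := hKcomp.exists_isMinOn hKne hcont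
  have hzmin' : ∀ y ∈ K, En d n α γ z ≤ En d n α γ y := fun y hy => hzmin hy
  have hzinj : Function.Injective z := by
    intro i j hij
    by_contra hne'
    have h := hKsep z hzK i j hne'
    rw [hij, sub_self, norm_zero] at h
    linarith
  refine ⟨z, hzinj, ?_⟩
  intro y hyinj
  -- single-term lower bound for injective configurations
  have hterm : ∀ i j : Fin n, i ≠ j →
      pw γ ‖y i - y j‖ - pw α ‖y i - y j‖ ≤ En d n α γ y := by
    intro i j hij
    have hposd : ∀ k l : Fin n, k ≠ l → 0 < ‖y k - y l‖ := by
      intro k l hkl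
      rw [norm_pos_iff, sub_ne_zero]
      exact fun h => hkl (hyinj h)
    have hnn : ∀ k l : Fin n,
        0 ≤ (if k = l then 0 else pw γ ‖y k - y l‖ - pw α ‖y k - y l‖) := by
      intro k l
      by_cases hkl : k = l
      · simp [hkl]
      · simp only [hkl, if_false]
        exact W_nonneg hα hγ hne (hposd k l hkl)
    unfold En
    calc pw γ ‖y i - y j‖ - pw α ‖y i - y j‖
        = (if i = j then 0 else pw γ ‖y i - y j‖ - pw α ‖y i - y j‖) := by
          rw [if_neg hij]
      _ ≤ ∑ l, (if i = l then 0 else pw γ ‖y i - y l‖ - pw α ‖y i - y l‖) :=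
          Finset.single_le_sum (fun l _ => hnn i l) (mem_univ j)
      _ ≤ ∑ k, ∑ l, (if k = l then 0 else pw γ ‖y k - y l‖ - pw α ‖y k - y l‖) :=
          Finset.single_le_sum
            (fun k _ => Finset.sum_nonneg fun l _ => hnn k l) (mem_univ i)
  -- translation of y
  have hn0 : 0 < n := lt_of_lt_of_le two_pos hn
  set i₀ : Fin n := ⟨0, hn0⟩ with hi₀
  set y' : Fin n → E := fun i => y i - y i₀ with hy'
  have hy'sub : ∀ i j : Fin n, y' i - y' j = y i - y j := by
    intro i j
    rw [hy']
    simp only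
    abel
  have htrans : En d n α γ y' = En d n α γ y := by
    unfold En
    apply Finset.sum_congr rfl
    intro i _
    apply Finset.sum_congr rfl
    intro j _
    rw [hy'sub]
  have hzE₀ : En d n α γ z ≤ E₀ := hzmin' x₀ hx₀K
  by_cases hfar : ∃ i, D' < ‖y i - y i₀‖
  · obtain ⟨i, hi⟩ := hfar
    have hii₀ : i ≠ i₀ := by
      intro h
      rw [h, sub_self, norm_zero] at hi
      linarith
    have hW : E₀ < pw γ ‖y i - y i₀‖ - pw α ‖y i - y i₀‖ :=
      hDW _ (le_of_lt (lt_of_le_of_lt hD'D hi))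
    linarith [hterm i i₀ hii₀]
  by_cases hclose : ∃ i j, i ≠ j ∧ ‖y i - y j‖ < ε'
  · obtain ⟨i, j, hij, hsmall⟩ := hclose
    have hpos : 0 < ‖y i - y j‖ := by
      rw [norm_pos_iff, sub_ne_zero]
      exact fun h => hij (hyinj h)
    have hdistε : dist ‖y i - y j‖ (0 : ℝ) < ε := by
      rw [Real.dist_eq, sub_zero, abs_of_pos hpos]
      exact lt_of_lt_of_le hsmall hε'leε
    have hW : E₀ < pw γ ‖y i - y j‖ - pw α ‖y i - y j‖ := hεW hdistε hpos
    linarith [hterm i j hij]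
  · push_neg at hfar hclose
    have hy'K : y' ∈ K := by
      constructor
      · refine Set.mem_iInter.2 fun i => ?_
        exact hfar i
      · refine Set.mem_iInter.2 fun i => Set.mem_iInter.2 fun j => ?_
        by_cases hij : i = j
        · exact Or.inr hij
        · refine Or.inl ?_
          show ε' ≤ ‖y' i - y' j‖
          rw [hy'sub]
          exact hclose i j hij
    calc En d n α γ z ≤ En d n α γ y' := hzmin' y' hy'K
      _ = En d n α γ y := htrans
end

section
/- Suppose α ≤ 1 ≤ γ with α < γ (d = 1). Let x, y ∈ ℝ^n satisfy x_1 ≤ … ≤ x_n, y_1 ≤ … ≤ y_n, Σ x_i = Σ y_i = 0 (with pairwise distinct entries if α ≤ 0). Then E_n((x+y)/2) ≤ (E_n(x) + E_n(y))/2, with equality only if x = y. -/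
open Finset

noncomputable def En1 (n : ℕ) (α γ : ℝ) (x : Fin n → ℝ) : ℝ :=
  ∑ i, ∑ j, if i = j then 0 else pw γ |x i - x j| - pw α |x i - x j|

lemma hasDerivAt_pw (η : ℝ) {r : ℝ} (hr : 0 < r) :
    HasDerivAt (pw η) (r ^ (η - 1)) r := by
  have hpw : pw η = fun s => if η = 0 then Real.log s else s ^ η / η := rfl
  rw [hpw]
  rcases eq_or_ne η 0 with h | h
  · subst h
    simp only [if_pos rfl, if_pos trivial]
    have := Real.hasDerivAt_log hr.ne'
    convert this using 1
    rw [show (0:ℝ) - 1 = -1 by ring, Real.rpow_neg_one]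
  · simp only [if_neg h]
    have := (Real.hasDerivAt_rpow_const (p := η) (Or.inl hr.ne')).div_const η
    exact this.congr_deriv (mul_div_cancel_left₀ _ h)

lemma deriv2_pos (α γ : ℝ) (hα : α ≤ 1) (hγ : 1 ≤ γ) (h : α < γ) :
    ∀ r ∈ Set.Ioi (0:ℝ), 0 < (deriv^[2] (fun r => pw γ r - pw α r)) r := by
  intro r hr
  have hr' : (0:ℝ) < r := hr
  have hderiv : Set.EqOn (deriv (fun r => pw γ r - pw α r))
      (fun s => s ^ (γ - 1) - s ^ (α - 1)) (Set.Ioi 0) := by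
    intro s hs
    exact ((hasDerivAt_pw γ hs).sub (hasDerivAt_pw α hs)).deriv
  have heq : deriv (fun r => pw γ r - pw α r) =ᶠ[nhds r]
      (fun s => s ^ (γ - 1) - s ^ (α - 1)) :=
    Filter.eventuallyEq_of_mem (isOpen_Ioi.mem_nhds hr) hderiv
  have h2 : (deriv^[2] (fun r => pw γ r - pw α r)) r
      = (γ - 1) * r ^ (γ - 1 - 1) - (α - 1) * r ^ (α - 1 - 1) := by
    show deriv (deriv (fun r => pw γ r - pw α r)) r = _
    rw [heq.deriv_eq]
    exact ((Real.hasDerivAt_rpow_const (p := γ - 1) (Or.inl hr'.ne')).sub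
      (Real.hasDerivAt_rpow_const (p := α - 1) (Or.inl hr'.ne'))).deriv
  rw [h2]
  rcases hα.lt_or_eq with hα1 | hα1
  · have h1 : 0 ≤ (γ - 1) * r ^ (γ - 1 - 1) :=
      mul_nonneg (by linarith) (Real.rpow_pos_of_pos hr' _).le
    have h2' : (α - 1) * r ^ (α - 1 - 1) < 0 :=
      mul_neg_of_neg_of_pos (by linarith) (Real.rpow_pos_of_pos hr' _)
    linarith
  · have hγ1 : 1 < γ := by linarith
    have h1 : 0 < (γ - 1) * r ^ (γ - 1 - 1) :=
      mul_pos (by linarith) (Real.rpow_pos_of_pos hr' _)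
    subst hα1
    simp only [sub_self, zero_mul, sub_zero]
    exact h1

lemma scvx_Ioi (α γ : ℝ) (hα : α ≤ 1) (hγ : 1 ≤ γ) (h : α < γ) :
    StrictConvexOn ℝ (Set.Ioi 0) (fun r => pw γ r - pw α r) := by
  apply strictConvexOn_of_deriv2_pos (convex_Ioi 0)
  · intro r hr
    exact ((hasDerivAt_pw γ hr).sub (hasDerivAt_pw α hr)).continuousAt.continuousWithinAt
  · rw [interior_Ioi]
    exact deriv2_pos α γ hα hγ h

lemma scvx_Ici (α γ : ℝ) (hα0 : 0 < α) (hα : α ≤ 1) (hγ : 1 ≤ γ) (h : α < γ) :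
    StrictConvexOn ℝ (Set.Ici 0) (fun r => pw γ r - pw α r) := by
  apply strictConvexOn_of_deriv2_pos (convex_Ici 0)
  · have hc : ∀ η : ℝ, 0 < η → Continuous (pw η) := by
      intro η hη
      have : pw η = fun s => s ^ η / η := by
        funext s; simp [pw, hη.ne']
      rw [this]
      exact (Real.continuous_rpow_const hη.le).div_const η
    exact (((hc γ (by linarith)).sub (hc α hα0)).continuousOn)
  · rw [interior_Ici]
    exact deriv2_pos α γ hα hγ h

lemma abs_avg (a b c d : ℝ) (h1 : a ≤ b) (h2 : c ≤ d) :
    |(a + c) / 2 - (b + d) / 2| = (|a - b| + |c - d|) / 2 := by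
  rw [abs_of_nonpos (by linarith), abs_of_nonpos (by linarith),
    abs_of_nonpos (by linarith)]
  ring

lemma mid_abs {n : ℕ} (x y : Fin n → ℝ) (hxm : Monotone x) (hym : Monotone y) (i j : Fin n) :
    |((x + y) / 2) i - ((x + y) / 2) j| = (|x i - x j| + |y i - y j|) / 2 := by
  have hx : ((x + y) / 2) i = (x i + y i) / 2 := rfl
  have hy : ((x + y) / 2) j = (x j + y j) / 2 := rfl
  rw [hx, hy]
  rcases le_total i j with hij | hij
  · exact abs_avg _ _ _ _ (hxm hij) (hym hij)
  · rw [abs_sub_comm, abs_sub_comm (x i), abs_sub_comm (y i)]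
    exact abs_avg _ _ _ _ (hxm hij) (hym hij)

lemma key_sum {n : ℕ} (hn : 0 < n) (α γ : ℝ) (S : Set ℝ)
    (scvx : StrictConvexOn ℝ S (fun r => pw γ r - pw α r))
    (x y : Fin n → ℝ) (hxm : Monotone x) (hym : Monotone y)
    (hxs : ∑ i, x i = 0) (hys : ∑ i, y i = 0)
    (hxS : ∀ i j : Fin n, i ≠ j → |x i - x j| ∈ S)
    (hyS : ∀ i j : Fin n, i ≠ j → |y i - y j| ∈ S)
    (hxy : x ≠ y) :
    En1 n α γ ((x + y) / 2) < (En1 n α γ x + En1 n α γ y) / 2 := by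
  set w : ℝ → ℝ := fun r => pw γ r - pw α r with hw
  have hE : ∀ z : Fin n → ℝ, En1 n α γ z =
      ∑ p ∈ (univ ×ˢ univ : Finset (Fin n × Fin n)),
        (if p.1 = p.2 then 0 else w |z p.1 - z p.2|) := by
    intro z
    rw [En1, Finset.sum_product]
  -- per pair ≤
  have hle : ∀ p : Fin n × Fin n,
      (if p.1 = p.2 then 0 else w |((x+y)/2) p.1 - ((x+y)/2) p.2|)
      ≤ ((if p.1 = p.2 then 0 else w |x p.1 - x p.2|)
        + (if p.1 = p.2 then 0 else w |y p.1 - y p.2|)) / 2 := by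
    rintro ⟨i, j⟩
    by_cases hij : i = j
    · simp [hij]
    · simp only [if_neg hij]
      have hm := mid_abs x y hxm hym i j
      have hc := scvx.convexOn.2 (hxS i j hij) (hyS i j hij)
        (by norm_num : (0:ℝ) ≤ 1/2) (by norm_num : (0:ℝ) ≤ 1/2) (by norm_num)
      simp only [smul_eq_mul] at hc
      have harg : (1/2 : ℝ) * |x i - x j| + (1/2 : ℝ) * |y i - y j|
          = (|x i - x j| + |y i - y j|) / 2 := by ring
      rw [harg, ← hm] at hc
      linarith
  -- strict pair
  have hpair : ∃ i j : Fin n, i ≠ j ∧ |x i - x j| ≠ |y i - y j| := by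
    by_contra hcon
    push_neg at hcon
    have hdiff : ∀ i j : Fin n, i ≤ j → x j - x i = y j - y i := by
      intro i j hij
      rcases eq_or_lt_of_le hij with rfl | hlt
      · ring
      · have habs := hcon i j hlt.ne
        rw [abs_sub_comm, abs_of_nonneg (sub_nonneg.2 (hxm hij)),
          abs_sub_comm, abs_of_nonneg (sub_nonneg.2 (hym hij))] at habs
        exact habs
    have hconst : ∀ i j : Fin n, x i - y i = x j - y j := by
      intro i j
      rcases le_total i j with hij | hij
      · have := hdiff i j hij; linarith
      · have := hdiff j i hij; linarith
    have i0 : Fin n := ⟨0, hn⟩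
    have hsum : ∑ i : Fin n, (x i - y i) = 0 := by
      rw [Finset.sum_sub_distrib, hxs, hys]; ring
    have hsum2 : ∑ i : Fin n, (x i - y i) = n * (x i0 - y i0) := by
      rw [Finset.sum_congr rfl (fun i _ => hconst i i0)]
      simp [Finset.card_univ]
      ring
    have hc0 : x i0 - y i0 = 0 := by
      have hn' : (0:ℝ) < n := by exact_mod_cast hn
      rw [hsum2] at hsum
      rcases mul_eq_zero.1 hsum with h' | h'
      · exact absurd h' hn'.ne'
      · exact h'
    apply hxy
    funext i
    have := hconst i i0
    rw [hc0] at this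
    linarith
  obtain ⟨i, j, hij, hne⟩ := hpair
  have hlt : ∑ p ∈ (univ ×ˢ univ : Finset (Fin n × Fin n)),
      (if p.1 = p.2 then 0 else w |((x+y)/2) p.1 - ((x+y)/2) p.2|)
      < ∑ p ∈ (univ ×ˢ univ : Finset (Fin n × Fin n)),
      ((if p.1 = p.2 then 0 else w |x p.1 - x p.2|)
        + (if p.1 = p.2 then 0 else w |y p.1 - y p.2|)) / 2 := by
    apply Finset.sum_lt_sum (fun p _ => hle p)
    refine ⟨(i, j), Finset.mem_product.2 ⟨mem_univ _, mem_univ _⟩, ?_⟩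
    simp only [if_neg hij]
    have hm := mid_abs x y hxm hym i j
    have hc := scvx.2 (hxS i j hij) (hyS i j hij) hne
      (by norm_num : (0:ℝ) < 1/2) (by norm_num : (0:ℝ) < 1/2) (by norm_num)
    simp only [smul_eq_mul] at hc
    have harg : (1/2 : ℝ) * |x i - x j| + (1/2 : ℝ) * |y i - y j|
        = (|x i - x j| + |y i - y j|) / 2 := by ring
    rw [harg, ← hm] at hc
    linarith
  calc En1 n α γ ((x + y) / 2) = _ := hE _
    _ < _ := hlt
    _ = (En1 n α γ x + En1 n α γ y) / 2 := by
        rw [hE x, hE y, ← Finset.sum_div, ← Finset.sum_add_distrib]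

theorem stmt_16 (n : ℕ) (hn : 2 ≤ n) (α γ : ℝ) (hα : α ≤ 1) (hγ : 1 ≤ γ) (h : α < γ)
    (x y : Fin n → ℝ) (hxm : Monotone x) (hym : Monotone y)
    (hxs : ∑ i, x i = 0) (hys : ∑ i, y i = 0)
    (hxd : α ≤ 0 → Function.Injective x) (hyd : α ≤ 0 → Function.Injective y) :
    En1 n α γ ((x + y) / 2) ≤ (En1 n α γ x + En1 n α γ y) / 2 ∧
    (En1 n α γ ((x + y) / 2) = (En1 n α γ x + En1 n α γ y) / 2 → x = y) := by
  by_cases hxy : x = y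
  · subst hxy
    have hm : (x + x) / 2 = x := by funext i; show (x i + x i) / 2 = x i; ring
    rw [hm]
    exact ⟨by linarith, fun _ => rfl⟩
  · have hn0 : 0 < n := by omega
    have key : En1 n α γ ((x + y) / 2) < (En1 n α γ x + En1 n α γ y) / 2 := by
      by_cases hα0 : α ≤ 0
      · refine key_sum hn0 α γ (Set.Ioi 0) (scvx_Ioi α γ hα hγ h) x y hxm hym hxs hys
          ?_ ?_ hxy
        · intro i j hij
          exact abs_pos.2 (sub_ne_zero.2 (fun he => hij (hxd hα0 he)))
        · intro i j hij
          exact abs_pos.2 (sub_ne_zero.2 (fun he => hij (hyd hα0 he)))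
      · push_neg at hα0
        exact key_sum hn0 α γ (Set.Ici 0) (scvx_Ici α γ hα0 hα hγ h) x y hxm hym hxs hys
          (fun i j _ => Set.mem_Ici.2 (abs_nonneg _)) (fun i j _ => Set.mem_Ici.2 (abs_nonneg _)) hxy
    exact ⟨key.le, fun he => absurd he key.ne⟩
end
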